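/- If θ' = (k'_r) is a lacunary refinement of the lacunary sequence θ = (k_r) (i.e., {k_r} ⊆ {k'_r}) and (x_m) ∈ AC_{θ'} in the strong sense that the averages over the refined blocks are uniformly small eventually, then (x_m) ∈ AC_θ. -/
import Mathlib


open Filter Finset

/-- Membership in the lacunary arithmetic convergence space `AC_θ`,
with lacunary sequence given by `k` (blocks `I_r = (k r, k (r+1)]`,
`h_r = k (r + 1) - k r`) and witness integer `n`. -/
def ACtheta (k : ℕ → ℕ) (n : ℕ) (x : ℕ → ℝ) : Prop :=
  Tendsto (fun r => (1 / ((k (r + 1) - k r : ℕ) : ℝ)) *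
    ∑ m ∈ Finset.Ioc (k r) (k (r + 1)), |x m - x (Nat.gcd m n)|) atTop (nhds 0)

/-- Membership in the strongly Cesàro arithmetic convergence space `AC_{σ₁}`
with witness integer `n`. -/
def ACsigma (n : ℕ) (x : ℕ → ℝ) : Prop :=
  Tendsto (fun t : ℕ => (1 / (t : ℝ)) *
    ∑ m ∈ Finset.Icc 1 t, |x m - x (Nat.gcd m n)|) atTop (nhds 0)

/-- Decomposition of a sum over `Ioc (k' a) (k' b)` into sums over the
consecutive blocks `Ioc (k' i) (k' (i+1))`, `a ≤ i < b`. -/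
lemma sum_blocks {M : Type*} [AddCommMonoid M] (g : ℕ → M) (k' : ℕ → ℕ)
    (hk' : Monotone k') :
    ∀ a b, a ≤ b → ∑ i ∈ Finset.Ico a b, ∑ m ∈ Finset.Ioc (k' i) (k' (i+1)), g m
      = ∑ m ∈ Finset.Ioc (k' a) (k' b), g m := by
  intro a b h
  induction b, h using Nat.le_induction with
  | base => simp
  | succ b hab ih =>
    rw [Finset.sum_Ico_succ_top (by omega : a ≤ b), ih,
      Finset.sum_Ioc_consecutive _ (hk' hab) (hk' (Nat.le_succ b))]

/-- if `θ'` is a lacunary refinement of `θ` and `x ∈ AC_{θ'}`,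
then `x ∈ AC_θ`. -/
theorem ACtheta_of_refinement (k k' : ℕ → ℕ)
    (hk : StrictMono k) (hk' : StrictMono k')
    (hh : Tendsto (fun r => (k (r + 1) - k r : ℕ)) atTop atTop)
    (hh' : Tendsto (fun r => (k' (r + 1) - k' r : ℕ)) atTop atTop)
    (href : Set.range k ⊆ Set.range k')
    (n : ℕ) (x : ℕ → ℝ)
    (hx : ACtheta k' n x) :
    ACtheta k n x := by
  classical
  -- choose indices f with k' (f r) = k r
  have hex : ∀ r, ∃ j, k' j = k r := fun r => href ⟨r, rfl⟩
  choose f hf using hex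
  have hfmono : StrictMono f := by
    intro i j hij
    have : k' (f i) < k' (f j) := by rw [hf, hf]; exact hk hij
    exact hk'.lt_iff_lt.mp this
  set S : ℕ → ℝ := fun i => ∑ m ∈ Finset.Ioc (k' i) (k' (i+1)), |x m - x (Nat.gcd m n)|
    with hS
  have hS0 : ∀ i, 0 ≤ S i := fun i => Finset.sum_nonneg fun m _ => abs_nonneg _
  have hpos' : ∀ i, (0 : ℝ) < ((k' (i+1) - k' i : ℕ) : ℝ) := by
    intro i
    have : k' i < k' (i+1) := hk' (Nat.lt_succ_self i)
    exact_mod_cast Nat.sub_pos_of_lt this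
  unfold ACtheta at hx ⊢
  rw [Metric.tendsto_atTop] at hx ⊢
  intro ε hε
  obtain ⟨N, hN⟩ := hx (ε / 2) (by positivity)
  refine ⟨N, fun r hr => ?_⟩
  have hab : f r ≤ f (r + 1) := (hfmono (Nat.lt_succ_self r)).le
  have hH : (0 : ℝ) < ((k (r+1) - k r : ℕ) : ℝ) := by
    have : k r < k (r+1) := hk (Nat.lt_succ_self r)
    exact_mod_cast Nat.sub_pos_of_lt this
  -- each small block sum is < (ε/2) * h'_i
  have hblock : ∀ i ∈ Finset.Ico (f r) (f (r+1)),
      S i ≤ (ε / 2) * ((k' (i+1) - k' i : ℕ) : ℝ) := by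
    intro i hi
    have hiN : N ≤ i := le_trans (le_trans hr hfmono.le_apply) (Finset.mem_Ico.mp hi).1
    have := hN i hiN
    rw [Real.dist_eq, sub_zero, abs_of_nonneg (by positivity)] at this
    have h2 : S i / ((k' (i+1) - k' i : ℕ) : ℝ) < ε / 2 := by
      rwa [one_div, inv_mul_eq_div] at this
    exact ((div_lt_iff₀ (hpos' i)).mp h2).le.trans (by rw [mul_comm])
  -- sum of small block lengths equals the big block length
  have htele : ∑ i ∈ Finset.Ico (f r) (f (r+1)), ((k' (i+1) - k' i : ℕ) : ℝ)
      = ((k (r+1) - k r : ℕ) : ℝ) := by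
    have := sum_blocks (fun _ => (1 : ℝ)) k' hk'.monotone (f r) (f (r+1)) hab
    simpa [Finset.sum_const, Nat.card_Ioc, hf] using this
  -- decompose the big block sum
  have hdecomp : ∑ m ∈ Finset.Ioc (k r) (k (r+1)), |x m - x (Nat.gcd m n)|
      = ∑ i ∈ Finset.Ico (f r) (f (r+1)), S i := by
    rw [hS]
    have := sum_blocks (fun m => |x m - x (Nat.gcd m n)|) k' hk'.monotone
      (f r) (f (r+1)) hab
    rw [hf, hf] at this
    exact this.symm
  rw [Real.dist_eq, sub_zero]
  have hsum_nonneg : (0 : ℝ) ≤ ∑ m ∈ Finset.Ioc (k r) (k (r+1)), |x m - x (Nat.gcd m n)| :=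
    Finset.sum_nonneg fun m _ => abs_nonneg _
  rw [abs_of_nonneg (by positivity)]
  calc (1 / ((k (r+1) - k r : ℕ) : ℝ)) * ∑ m ∈ Finset.Ioc (k r) (k (r+1)),
        |x m - x (Nat.gcd m n)|
      ≤ (1 / ((k (r+1) - k r : ℕ) : ℝ)) * ((ε / 2) * ((k (r+1) - k r : ℕ) : ℝ)) := by
        apply mul_le_mul_of_nonneg_left _ (by positivity)
        rw [hdecomp, ← htele, Finset.mul_sum]
        exact Finset.sum_le_sum hblock
    _ = ε / 2 := by field_simp
    _ < ε := by linarith
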